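/- Let E be a field of characteristic 0 and F = E(x) a simple extension of odd degree n. Then the Scharlau/trace transfer of the unit form satisfies Tr_{F/E}(⟨1⟩) = n_ε in GW(E), where n_ε = Σ_{i=1}^n ⟨-1⟩^{i-1}. -/

import Mathlib

/-- Axiomatization of the Grothendieck–Witt ring of a field `E`, together with the
class map sending (the Gram matrix of) a nondegenerate symmetric bilinear form to its
class in `GW(E)`. -/
structure GWClsData (E : Type) [Field E] (R : Type) [CommRing R] : Type where
  /-- the class `⟨a⟩` of the rank-one form given by `a` (only meaningful for `a ≠ 0`) -/
  diag : E → R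
  diag_one : diag 1 = 1
  diag_mul : ∀ a b : E, a ≠ 0 → b ≠ 0 → diag (a * b) = diag a * diag b
  diag_sq : ∀ a : E, a ≠ 0 → diag (a ^ 2) = 1
  diag_chain : ∀ a b : E, a ≠ 0 → b ≠ 0 → a + b ≠ 0 →
    diag a + diag b = diag (a + b) + diag (a * b * (a + b))
  /-- the class of the symmetric bilinear form with Gram matrix `M` -/
  cls : {n : ℕ} → Matrix (Fin n) (Fin n) E → R
  cls_diagonal : ∀ {n : ℕ} (d : Fin n → E), (∀ i, d i ≠ 0) →
    cls (Matrix.diagonal d) = ∑ i, diag (d i)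
  cls_congr : ∀ {n : ℕ} (M P : Matrix (Fin n) (Fin n) E), IsUnit P.det →
    cls (P.transpose * M * P) = cls M

/-- `n_ε = Σ_{i=1}^{n} ⟨-1⟩^{i-1}` in the Grothendieck–Witt ring. -/
def GWClsData.nEps {E : Type} [Field E] {R : Type} [CommRing R]
    (gw : GWClsData E R) (n : ℕ) : R :=
  ∑ i ∈ Finset.range n, (gw.diag (-1)) ^ i

section GWAux

open Finset

variable {E : Type} [Field E] {R : Type} [CommRing R]

lemma GWClsData.diag_neg_one_mul_self (gw : GWClsData E R) :
    gw.diag (-1) * gw.diag (-1) = 1 := by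
  have h := gw.diag_mul (-1) (-1) (by norm_num) (by norm_num)
  rw [show ((-1 : E) * -1) = 1 by norm_num, gw.diag_one] at h
  exact h.symm

lemma GWClsData.diag_two_add [CharZero E] (gw : GWClsData E R) :
    gw.diag 2 + gw.diag (-2) = 1 + gw.diag (-1) := by
  have h1 := gw.diag_chain 2 (-1) (by norm_num) (by norm_num) (by norm_num)
  rw [show (2 : E) + -1 = 1 by norm_num, show (2 : E) * -1 * 1 = -2 by norm_num,
    gw.diag_one] at h1
  have h2 := gw.diag_chain 2 2 (by norm_num) (by norm_num) (by norm_num)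
  rw [show (2 : E) + 2 = 4 by norm_num, show (2 : E) * 2 * 4 = 16 by norm_num] at h2
  have h4 : gw.diag 4 = 1 := by
    have := gw.diag_sq 2 (by norm_num); rwa [show (2 : E) ^ 2 = 4 by norm_num] at this
  have h16 : gw.diag 16 = 1 := by
    have := gw.diag_sq 4 (by norm_num); rwa [show (4 : E) ^ 2 = 16 by norm_num] at this
  rw [h4, h16] at h2
  linear_combination h2 - h1

lemma GWClsData.nEps_odd (gw : GWClsData E R) (m : ℕ) :
    gw.nEps (2 * m + 1) = (m + 1) • (1 : R) + m • gw.diag (-1) := by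
  have hsq := gw.diag_neg_one_mul_self
  induction m with
  | zero => simp [GWClsData.nEps]
  | succ m ih =>
      have h1 : 2 * (m + 1) + 1 = (2 * m + 1) + 1 + 1 := by ring
      rw [GWClsData.nEps] at ih ⊢
      rw [h1, Finset.sum_range_succ, Finset.sum_range_succ, ih]
      have hpow : gw.diag (-1) ^ (2 * m) = 1 := by
        rw [pow_mul, show gw.diag (-1) ^ 2 = 1 by rw [sq, hsq], one_pow]
      have hx : gw.diag (-1) ^ (2 * m + 1) = gw.diag (-1) := by
        rw [pow_succ, hpow, one_mul]
      have hy : gw.diag (-1) ^ (2 * m + 1 + 1) = 1 := by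
        rw [pow_succ, hx, hsq]
      rw [hx, hy]
      simp only [succ_nsmul]
      abel

/-- The invariant used in the reduction of the transfer Gram matrix to the
anti-identity matrix. -/
def gwHankelInv (n : ℕ) (M : Matrix (Fin n) (Fin n) E) (l : ℕ) : Prop :=
  (∀ i j, M i j = M j i) ∧
  (∀ i j : Fin n, (i : ℕ) + (j : ℕ) < n - 1 → M i j = 0) ∧
  (∀ i j : Fin n, (i : ℕ) + (j : ℕ) = n - 1 → M i j = 1) ∧
  (∀ i j : Fin n, n - 1 < (i : ℕ) + (j : ℕ) →
    ((i : ℕ) < l ∨ (j : ℕ) < l ∨ n - 1 - l < (i : ℕ) ∨ n - 1 - l < (j : ℕ)) → M i j = 0)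

lemma gw_step [CharZero E] (gw : GWClsData E R) (n l : ℕ) (hl : 2 * l + 1 < n)
    (l₁ l₂ : Fin n) (hv1 : (l₁ : ℕ) = l) (hv2 : (l₂ : ℕ) = n - 1 - l)
    (M : Matrix (Fin n) (Fin n) E) (h : gwHankelInv n M l) :
    ∃ M', gwHankelInv n M' (l + 1) ∧ gw.cls M' = gw.cls M := by
  obtain ⟨hsym, hlt, heq, hout⟩ := h
  set w : Fin n → E := fun j => if l < (j : ℕ) ∧ (j : ℕ) < n - 1 - l then -(M l₂ j)
    else if (j : ℕ) = n - 1 - l then -(M l₂ l₂) / 2 else 0 with hw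
  set P : Matrix (Fin n) (Fin n) E :=
    Matrix.of fun a j => (if a = j then (1 : E) else 0) + (if a = l₁ then w j else 0) with hP
  have hPe : ∀ a j : Fin n, P a j
      = (if a = j then (1 : E) else 0) + (if a = l₁ then w j else 0) := fun _ _ => rfl
  have hw0 : ∀ j : Fin n, (j : ℕ) ≤ l → w j = 0 := by
    intro j hj
    simp only [hw]
    rw [if_neg (by omega), if_neg (by omega)]
  have hwlt : ∀ j : Fin n, l < (j : ℕ) → (j : ℕ) < n - 1 - l → w j = -(M l₂ j) := by
    intro j h1 h2; simp only [hw]; rw [if_pos ⟨h1, h2⟩]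
  have hweq : ∀ j : Fin n, (j : ℕ) = n - 1 - l → w j = -(M l₂ l₂) / 2 := by
    intro j hj; simp only [hw]; rw [if_neg (by omega), if_pos hj]
  have hwgt : ∀ j : Fin n, n - 1 - l < (j : ℕ) → w j = 0 := by
    intro j hj; simp only [hw]; rw [if_neg (by omega), if_neg (by omega)]
  have hM11 : M l₁ l₁ = 0 := hlt _ _ (by omega)
  have hrow : ∀ j : Fin n, M l₁ j = if (j : ℕ) = n - 1 - l then 1 else 0 := by
    intro j
    by_cases hj : (j : ℕ) = n - 1 - l
    · rw [if_pos hj]; exact heq _ _ (by omega)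
    · rw [if_neg hj]
      rcases lt_or_gt_of_ne (show (l₁ : ℕ) + (j : ℕ) ≠ n - 1 by omega) with h' | h'
      · exact hlt _ _ h'
      · exact hout _ _ h' (by omega)
  have hkey : ∀ i j, (P.transpose * M * P) i j
      = M i j + w i * M l₁ j + M i l₁ * w j + w i * M l₁ l₁ * w j := by
    intro i j
    have h1 : ∀ b, (P.transpose * M) i b = M i b + w i * M l₁ b := by
      intro b
      simp only [Matrix.mul_apply, Matrix.transpose_apply, hPe, add_mul, ite_mul, one_mul,
        zero_mul, Finset.sum_add_distrib, Finset.sum_ite_eq', Finset.mem_univ, if_true]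
    rw [Matrix.mul_apply]
    simp only [h1, hPe, mul_add, mul_ite, mul_one, mul_zero, Finset.sum_add_distrib,
      Finset.sum_ite_eq', Finset.mem_univ, if_true]
    ring
  have hkey2 : ∀ i j, (P.transpose * M * P) i j
      = M i j + (if (j : ℕ) = n - 1 - l then w i else 0)
        + (if (i : ℕ) = n - 1 - l then w j else 0) := by
    intro i j
    rw [hkey i j, hM11, hrow j, hsym i l₁, hrow i]
    simp only [mul_ite, mul_one, mul_zero, ite_mul, one_mul, zero_mul, zero_mul, mul_zero,
      add_zero]
  refine ⟨P.transpose * M * P, ⟨?_, ?_, ?_, ?_⟩, gw.cls_congr M P ?_⟩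
  · intro i j; rw [hkey2, hkey2, hsym i j]; ring
  · intro i j hij
    rw [hkey2]
    have t1 : (if (j : ℕ) = n - 1 - l then w i else 0) = 0 := by
      split
      · exact hw0 i (by omega)
      · rfl
    have t2 : (if (i : ℕ) = n - 1 - l then w j else 0) = 0 := by
      split
      · exact hw0 j (by omega)
      · rfl
    rw [t1, t2, hlt i j hij]; ring
  · intro i j hij
    rw [hkey2]
    have t1 : (if (j : ℕ) = n - 1 - l then w i else 0) = 0 := by
      split
      · exact hw0 i (by omega)
      · rfl
    have t2 : (if (i : ℕ) = n - 1 - l then w j else 0) = 0 := by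
      split
      · exact hw0 j (by omega)
      · rfl
    rw [t1, t2, heq i j hij]; ring
  · intro i j hgt hcase
    rw [hkey2]
    by_cases hj2 : (j : ℕ) = n - 1 - l <;> by_cases hi2 : (i : ℕ) = n - 1 - l
    · -- i = j = l₂
      have hi' : i = l₂ := Fin.ext (by omega)
      have hj' : j = l₂ := Fin.ext (by omega)
      rw [if_pos hj2, if_pos hi2, hweq i hi2, hweq j hj2, hi', hj']
      ring
    · -- j = l₂, i ≠ l₂
      rw [if_pos hj2, if_neg hi2, add_zero]
      have hj' : j = l₂ := Fin.ext (by omega)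
      rcases lt_or_gt_of_ne hi2 with h' | h'
      · rw [hwlt i (by omega) h', hj', hsym i l₂]; ring
      · rw [hwgt i h', hout i j hgt (by omega), add_zero]
    · -- i = l₂, j ≠ l₂
      rw [if_neg hj2, if_pos hi2, add_zero]
      have hi' : i = l₂ := Fin.ext (by omega)
      rcases lt_or_gt_of_ne hj2 with h' | h'
      · rw [hwlt j (by omega) h', hi']; ring
      · rw [hwgt j h', hout i j hgt (by omega), add_zero]
    · rw [if_neg hj2, if_neg hi2, add_zero, add_zero]
      exact hout i j hgt (by omega)
  · -- P is unitriangular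
    have htri : P.det = ∏ i, P i i := by
      apply Matrix.det_of_upperTriangular
      intro i j hji
      rw [hPe, if_neg (by exact fun hh => absurd hh (by intro hh; subst hh; exact lt_irrefl _ hji))]
      by_cases hi : i = l₁
      · rw [if_pos hi, hw0 j (by have : (j : ℕ) < (i : ℕ) := hji; omega), add_zero]
      · rw [if_neg hi, add_zero]
    have hdiag : ∀ i, P i i = 1 := by
      intro i
      rw [hPe, if_pos rfl]
      by_cases hi : i = l₁
      · rw [if_pos hi, hw0 i (by omega), add_zero]
      · rw [if_neg hi, add_zero]
    rw [htri]
    simp [hdiag]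

lemma gw_reduce [CharZero E] (gw : GWClsData E R) (n m : ℕ) (hn : n = 2 * m + 1)
    (k l : ℕ) (hk : l + k = m) (M : Matrix (Fin n) (Fin n) E) (h : gwHankelInv n M l) :
    gw.cls M
      = gw.cls (Matrix.of fun i j : Fin n =>
          if (i : ℕ) + (j : ℕ) = n - 1 then (1 : E) else 0) := by
  induction k generalizing l M with
  | zero =>
      obtain ⟨hsym, hlt, heq, hout⟩ := h
      have hMJ : M = Matrix.of fun i j : Fin n =>
          if (i : ℕ) + (j : ℕ) = n - 1 then (1 : E) else 0 := by
        ext i j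
        by_cases hij : (i : ℕ) + (j : ℕ) = n - 1
        · simp only [Matrix.of_apply, if_pos hij]; exact heq i j hij
        · simp only [Matrix.of_apply, if_neg hij]
          rcases lt_or_gt_of_ne hij with h' | h'
          · exact hlt i j h'
          · exact hout i j h' (by have := i.isLt; have := j.isLt; omega)
      rw [hMJ]
  | succ k ih =>
      obtain ⟨M', h', hcls⟩ := gw_step gw n l (by omega) ⟨l, by omega⟩ ⟨n - 1 - l, by omega⟩
        rfl rfl M h
      rw [← hcls]
      exact ih (l + 1) (by omega) M' h'

/-- reversal of `Fin n` around `n-1`. -/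
def finRev {n : ℕ} (a : Fin n) : Fin n := ⟨n - 1 - (a : ℕ), by have := a.isLt; omega⟩

lemma finRev_rev {n : ℕ} (a : Fin n) : finRev (finRev a) = a := by
  apply Fin.ext
  show n - 1 - (n - 1 - (a : ℕ)) = a
  have := a.isLt; omega

def gwF1 (E : Type) [Field E] (m : ℕ) (i : ℕ) : E := if m < i then -1 else 1

def gwF0 (E : Type) [Field E] (m : ℕ) (i : ℕ) : E := if i = m then 0 else 1

/-- the diagonalizing matrix for the anti-identity form -/
def gwP2 (E : Type) [Field E] (n m : ℕ) : Matrix (Fin n) (Fin n) E :=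
  Matrix.of fun a i => gwF1 E m i * (if a = i then 1 else 0)
    + gwF0 E m i * (if a = finRev i then 1 else 0)

def gwd (E : Type) [Field E] (m : ℕ) (i : ℕ) : E :=
  if i < m then 2 else if i = m then 1 else -2

lemma sum_range_split {R : Type} [AddCommMonoid R] (m : ℕ) (A B C : R) :
    ∑ i ∈ Finset.range (2 * m + 1), (if i < m then A else if i = m then B else C)
      = m • A + B + m • C := by
  rw [Finset.range_eq_Ico,
    ← Finset.sum_Ico_consecutive _ (Nat.zero_le m) (by omega : m ≤ 2 * m + 1),
    ← Finset.sum_Ico_consecutive _ (by omega : m ≤ m + 1) (by omega : m + 1 ≤ 2 * m + 1)]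
  have p1 : ∑ i ∈ Finset.Ico 0 m, (if i < m then A else if i = m then B else C) = m • A := by
    rw [Finset.sum_congr rfl (fun i hi => ?_), Finset.sum_const, Nat.card_Ico, Nat.sub_zero]
    rw [Finset.mem_Ico] at hi
    rw [if_pos hi.2]
  have p2 : ∑ i ∈ Finset.Ico m (m + 1), (if i < m then A else if i = m then B else C) = B := by
    rw [show Finset.Ico m (m + 1) = {m} by rw [Finset.Ico_add_one_right_eq_Icc, Finset.Icc_self],
      Finset.sum_singleton, if_neg (lt_irrefl m), if_pos rfl]
  have p3 : ∑ i ∈ Finset.Ico (m + 1) (2 * m + 1),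
      (if i < m then A else if i = m then B else C) = m • C := by
    rw [Finset.sum_congr rfl (fun i hi => ?_), Finset.sum_const, Nat.card_Ico]
    · congr 1; omega
    rw [Finset.mem_Ico] at hi
    rw [if_neg (by omega), if_neg (by omega)]
  rw [p1, p2, p3, add_assoc]

lemma gw_cls_J [CharZero E] (gw : GWClsData E R) (n m : ℕ) (hn : n = 2 * m + 1) :
    gw.cls (Matrix.of fun i j : Fin n =>
        if (i : ℕ) + (j : ℕ) = n - 1 then (1 : E) else 0) = gw.nEps n := by
  set J : Matrix (Fin n) (Fin n) E :=
    Matrix.of fun i j : Fin n => if (i : ℕ) + (j : ℕ) = n - 1 then (1 : E) else 0 with hJ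
  set P := gwP2 E n m with hP
  have hPapp : ∀ a i : Fin n, P a i = gwF1 E m i * (if a = i then 1 else 0)
      + gwF0 E m i * (if a = finRev i then 1 else 0) := fun _ _ => rfl
  -- row sums against J pick out the reversed index
  have hrevsum : ∀ (v : Fin n → E) (b : Fin n),
      (∑ a, v a * (if (a : ℕ) + (b : ℕ) = n - 1 then (1 : E) else 0)) = v (finRev b) := by
    intro v b
    rw [Finset.sum_eq_single (finRev b)]
    · rw [if_pos (by show (n - 1 - (b : ℕ)) + (b : ℕ) = n - 1; have := b.isLt; omega), mul_one]
    · intro a _ ha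
      rw [if_neg, mul_zero]
      intro hab
      exact ha (Fin.ext (by show (a : ℕ) = n - 1 - (b : ℕ); omega))
    · intro hmem; exact absurd (Finset.mem_univ _) hmem
  have hPJ : ∀ (i b : Fin n), (P.transpose * J) i b = P (finRev b) i := by
    intro i b
    rw [Matrix.mul_apply]
    exact hrevsum (fun a => P a i) b
  have hsum2 : ∀ (g : Fin n → E) (b₁ b₂ : E) (v₁ v₂ : Fin n),
      (∑ b, g b * (b₁ * (if b = v₁ then (1 : E) else 0)
        + b₂ * (if b = v₂ then (1 : E) else 0))) = g v₁ * b₁ + g v₂ * b₂ := by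
    intro g b₁ b₂ v₁ v₂
    simp only [mul_add, mul_ite, mul_one, mul_zero, Finset.sum_add_distrib,
      Finset.sum_ite_eq', Finset.mem_univ, if_true]
  have hrevcond : ∀ a i : Fin n, (finRev a = i) ↔ (a = finRev i) := by
    intro a i
    constructor
    · rintro rfl; exact (finRev_rev a).symm
    · rintro rfl; exact finRev_rev i
  have hentry : ∀ i j : Fin n, (P.transpose * J * P) i j
      = (gwF1 E m i * (if j = finRev i then 1 else 0)
          + gwF0 E m i * (if j = i then 1 else 0)) * gwF1 E m j
        + (gwF1 E m i * (if j = i then 1 else 0)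
          + gwF0 E m i * (if j = finRev i then 1 else 0)) * gwF0 E m j := by
    intro i j
    have hrevinj : ∀ a b : Fin n, (finRev a = finRev b) ↔ a = b := by
      intro a b
      constructor
      · intro h; rw [← finRev_rev a, h, finRev_rev]
      · intro h; rw [h]
    rw [Matrix.mul_apply]
    calc (∑ b, (P.transpose * J) i b * P b j)
        = ∑ b, P (finRev b) i * (gwF1 E m j * (if b = j then (1 : E) else 0)
            + gwF0 E m j * (if b = finRev j then 1 else 0)) :=
          Finset.sum_congr rfl (fun b _ => by rw [hPJ]; rfl)
      _ = P (finRev j) i * gwF1 E m j + P (finRev (finRev j)) i * gwF0 E m j :=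
          hsum2 (fun b => P (finRev b) i) _ _ _ _
      _ = _ := by
          rw [finRev_rev, hPapp, hPapp, if_congr (hrevcond j i) rfl rfl,
            if_congr (hrevinj j i) rfl rfl]
  have hdiagmat : P.transpose * J * P = Matrix.diagonal (fun i : Fin n => gwd E m (i : ℕ)) := by
    ext i j
    rw [hentry i j]
    have hiLt := i.isLt
    have hjLt := j.isLt
    by_cases hij : i = j
    · subst hij
      rw [Matrix.diagonal_apply_eq]
      have hii : (if i = i then (1 : E) else 0) = 1 := if_pos rfl
      have hrevi : (if i = finRev i then (1 : E) else 0) = (if (i : ℕ) = m then 1 else 0) := by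
        by_cases him : (i : ℕ) = m
        · rw [if_pos (Fin.ext (show (i : ℕ) = n - 1 - (i : ℕ) by omega) : i = finRev i),
            if_pos him]
        · rw [if_neg, if_neg him]
          intro hc
          have h2 : (i : ℕ) = n - 1 - (i : ℕ) := congrArg Fin.val hc
          omega
      rw [hii, hrevi]
      simp only [gwF1, gwF0, gwd]
      split_ifs <;> (first | omega | norm_num)
    · rw [Matrix.diagonal_apply_ne _ hij]
      have hIji : (if j = i then (1 : E) else 0) = 0 := if_neg (fun hh => hij hh.symm)
      by_cases hjr : j = finRev i
      · have hIr : (if j = finRev i then (1 : E) else 0) = 1 := if_pos hjr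
        have hji : (j : ℕ) = n - 1 - (i : ℕ) := congrArg Fin.val hjr
        have him : (i : ℕ) ≠ m := by
          intro hh
          exact hij (Fin.ext (show (i : ℕ) = (j : ℕ) by omega))
        rw [hIji, hIr]
        simp only [gwF1, gwF0]
        split_ifs <;> (first | omega | norm_num)
      · have hIr : (if j = finRev i then (1 : E) else 0) = 0 := if_neg hjr
        rw [hIji, hIr]
        ring
  -- the diagonal entries are nonzero
  have hdnz : ∀ i : Fin n, gwd E m (i : ℕ) ≠ 0 := by
    intro i
    rw [gwd]
    split
    · norm_num
    · split
      · norm_num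
      · norm_num
  -- P has unit determinant
  have hdet : IsUnit P.det := by
    have h1 : P.det * (J.det * P.det) = ∏ i : Fin n, gwd E m (i : ℕ) := by
      have := congrArg Matrix.det hdiagmat
      rwa [Matrix.det_mul, Matrix.det_mul, Matrix.det_transpose, Matrix.det_diagonal,
        mul_assoc] at this
    rw [isUnit_iff_ne_zero]
    intro h0
    rw [h0, zero_mul] at h1
    exact (Finset.prod_ne_zero_iff.mpr (fun i _ => hdnz i)) h1.symm
  have hcongr := gw.cls_congr J P hdet
  rw [hdiagmat] at hcongr
  rw [← hcongr, gw.cls_diagonal _ hdnz]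
  -- compute the sum
  subst hn
  rw [show (∑ i : Fin (2 * m + 1), gw.diag (gwd E m (i : ℕ)))
      = ∑ i ∈ Finset.range (2 * m + 1),
          (if i < m then gw.diag 2 else if i = m then gw.diag 1 else gw.diag (-2)) by
    rw [← Fin.sum_univ_eq_sum_range (fun i =>
      (if i < m then gw.diag 2 else if i = m then gw.diag 1 else gw.diag (-2)))]
    refine Finset.sum_congr rfl (fun i _ => ?_)
    rw [gwd]
    split_ifs <;> rfl]
  rw [sum_range_split, gw.diag_one, GWClsData.nEps_odd]
  have hkey : m • gw.diag 2 + m • gw.diag (-2) = m • (1 : R) + m • gw.diag (-1) := by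
    rw [← smul_add, gw.diag_two_add, smul_add]
  calc m • gw.diag 2 + 1 + m • gw.diag (-2)
      = (m • gw.diag 2 + m • gw.diag (-2)) + 1 := by abel
    _ = (m • (1 : R) + m • gw.diag (-1)) + 1 := by rw [hkey]
    _ = (m + 1) • (1 : R) + m • gw.diag (-1) := by rw [add_nsmul, one_nsmul]; abel

end GWAux

/-- Lam VII.2.2, odd-degree case: for a simple extension `F = E(x)` of odd degree `n`
over a field of characteristic zero, the (Scharlau/geometric) transfer of the unit
form — whose Gram matrix in the power basis `1, x, …, x^{n-1}` is
`(i, j) ↦ s(x^{i+j})`, where `s` is the `E`-linear functional dual to `x^{n-1}` —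
equals `n_ε` in `GW(E)`. -/
theorem transfer_one_odd_degree (E : Type) [Field E] [CharZero E]
    (F : Type) [Field F] [Algebra E F] (x : F)
    (hadj : IntermediateField.adjoin E {x} = ⊤)
    (n : ℕ) (hpos : 0 < n) [FiniteDimensional E F]
    (hdeg : Module.finrank E F = n) (hodd : Odd n)
    (b : Module.Basis (Fin n) E F) (hb : ∀ i : Fin n, b i = x ^ (i : ℕ))
    (R : Type) [CommRing R] (gw : GWClsData E R) :
    gw.cls (Matrix.of fun i j : Fin n =>
        b.coord ⟨n - 1, Nat.sub_lt hpos Nat.one_pos⟩ (x ^ ((i : ℕ) + (j : ℕ))))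
      = gw.nEps n := by
  obtain ⟨m, hm⟩ := hodd
  have hinv : gwHankelInv n (Matrix.of fun i j : Fin n =>
      b.coord ⟨n - 1, Nat.sub_lt hpos Nat.one_pos⟩ (x ^ ((i : ℕ) + (j : ℕ)))) 0 := by
    have hcoord : ∀ (i j : Fin n), (b.coord j) (b i) = if i = j then (1 : E) else 0 := by
      intro i j
      rw [Module.Basis.coord_apply, Module.Basis.repr_self, Finsupp.single_apply]
    have hc : ∀ k, k < n →
        b.coord ⟨n - 1, Nat.sub_lt hpos Nat.one_pos⟩ (x ^ k) = if k = n - 1 then (1 : E) else 0 := by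
      intro k hk
      rw [← hb ⟨k, hk⟩, hcoord]
      by_cases hkn : k = n - 1
      · rw [if_pos hkn, if_pos (Fin.ext hkn)]
      · rw [if_neg hkn, if_neg (fun hh => hkn (congrArg Fin.val hh))]
    refine ⟨?_, ?_, ?_, ?_⟩
    · intro i j
      simp only [Matrix.of_apply]
      rw [Nat.add_comm]
    · intro i j hij
      simp only [Matrix.of_apply]
      rw [hc _ (by have := i.isLt; have := j.isLt; omega), if_neg (by omega)]
    · intro i j hij
      simp only [Matrix.of_apply]
      rw [hc _ (by have := i.isLt; have := j.isLt; omega), if_pos (by omega)]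
    · intro i j _ hcase
      exfalso
      have := i.isLt; have := j.isLt
      omega
  rw [gw_reduce gw n m hm m 0 (by omega) _ hinv]
  exact gw_cls_J gw n m hm
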